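/- Parallel extension preserves links for α-rules: let π₀ be a GS3 open proof-tree linked via μ₀ to (T₀, σ), where T₀ is an initial part of a closed tableau T with ground unifier σ. If T₁ extends T₀ at open leaf b by an α-rule on formula A, then the proof-tree π₁ obtained from π₀ by applying the corresponding GS3 α-rule on σA at every open leaf s with μ₀(s) = b is linked to (T₁, σ). -/

import Mathlib

/-- First-order terms: de Bruijn bound variables, free (meta)variables, function applications. -/
inductive Tm : Type
  | var : ℕ → Tm
  | mvar : ℕ → Tm
  | fn : ℕ → List Tm → Tm

/-- First-order formulas (de Bruijn representation for quantifiers). -/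
inductive Fm : Type
  | atom : ℕ → List Tm → Fm
  | neg : Fm → Fm
  | and : Fm → Fm → Fm
  | or : Fm → Fm → Fm
  | imp : Fm → Fm → Fm
  | all : Fm → Fm
  | ex : Fm → Fm

mutual
/-- Apply a substitution of metavariables to a term. -/
def substTm (σ : ℕ → Tm) : Tm → Tm
  | .var n => .var n
  | .mvar X => σ X
  | .fn f ts => .fn f (substTms σ ts)
def substTms (σ : ℕ → Tm) : List Tm → List Tm
  | [] => []
  | t :: ts => substTm σ t :: substTms σ ts
end

mutual
/-- Replace bound variable `k` by the term `u` (assumed closed), shifting down. -/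
def instTm (u : Tm) (k : ℕ) : Tm → Tm
  | .var n => if n = k then u else if k < n then .var (n - 1) else .var n
  | .mvar X => .mvar X
  | .fn f ts => .fn f (instTms u k ts)
def instTms (u : Tm) (k : ℕ) : List Tm → List Tm
  | [] => []
  | t :: ts => instTm u k t :: instTms u k ts
end

mutual
/-- Metavariables occurring in a term. -/
def mvarsTm : Tm → List ℕ
  | .var _ => []
  | .mvar X => [X]
  | .fn _ ts => mvarsTms ts
def mvarsTms : List Tm → List ℕ
  | [] => []
  | t :: ts => mvarsTm t ++ mvarsTms ts
end

def Fm.substF (σ : ℕ → Tm) : Fm → Fm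
  | .atom P ts => .atom P (substTms σ ts)
  | .neg A => .neg (A.substF σ)
  | .and A B => .and (A.substF σ) (B.substF σ)
  | .or A B => .or (A.substF σ) (B.substF σ)
  | .imp A B => .imp (A.substF σ) (B.substF σ)
  | .all A => .all (A.substF σ)
  | .ex A => .ex (A.substF σ)

def Fm.instF (u : Tm) (k : ℕ) : Fm → Fm
  | .atom P ts => .atom P (instTms u k ts)
  | .neg A => .neg (A.instF u k)
  | .and A B => .and (A.instF u k) (B.instF u k)
  | .or A B => .or (A.instF u k) (B.instF u k)
  | .imp A B => .imp (A.instF u k) (B.instF u k)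
  | .all A => .all (A.instF u (k + 1))
  | .ex A => .ex (A.instF u (k + 1))

/-- Instantiate the outermost bound variable of a quantified formula body. -/
def Fm.inst1 (u : Tm) (A : Fm) : Fm := A.instF u 0

def Fm.mvarsF : Fm → List ℕ
  | .atom _ ts => mvarsTms ts
  | .neg A => A.mvarsF
  | .and A B => A.mvarsF ++ B.mvarsF
  | .or A B => A.mvarsF ++ B.mvarsF
  | .imp A B => A.mvarsF ++ B.mvarsF
  | .all A => A.mvarsF
  | .ex A => A.mvarsF

/-- Occurrence of a subterm satisfying `P` inside a term. -/
inductive OccT (P : Tm → Prop) : Tm → Prop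
  | here {t} : P t → OccT P t
  | arg {f ts t} : t ∈ ts → OccT P t → OccT P (.fn f ts)

/-- Occurrence of a subterm satisfying `P` inside a formula. -/
inductive OccF (P : Tm → Prop) : Fm → Prop
  | atom {n ts t} : t ∈ ts → OccT P t → OccF P (.atom n ts)
  | neg {A} : OccF P A → OccF P (.neg A)
  | andL {A B} : OccF P A → OccF P (.and A B)
  | andR {A B} : OccF P B → OccF P (.and A B)
  | orL {A B} : OccF P A → OccF P (.or A B)
  | orR {A B} : OccF P B → OccF P (.or A B)
  | impL {A B} : OccF P A → OccF P (.imp A B)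
  | impR {A B} : OccF P B → OccF P (.imp A B)
  | all {A} : OccF P A → OccF P (.all A)
  | ex {A} : OccF P A → OccF P (.ex A)

/-- The function/constant symbol `c` occurs in the term. -/
def SymInTm (c : ℕ) : Tm → Prop := OccT (fun u => ∃ ts, u = .fn c ts)
/-- The function/constant symbol `c` occurs in the formula. -/
def SymInFm (c : ℕ) : Fm → Prop := OccF (fun u => ∃ ts, u = .fn c ts)
/-- The metavariable `X` occurs in the formula. -/
def MvarInFm (X : ℕ) : Fm → Prop := OccF (fun u => u = .mvar X)
/-- The term `u` occurs as a subterm in the formula. -/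
def TmInFm (u : Tm) : Fm → Prop := OccF (fun v => v = u)

/-- GS3: one-sided, cut-free sequent calculus with implicit contraction and
explicit weakening; `GS3 Δ` means the sequent `Δ ⊢` is derivable. -/
inductive GS3 : Multiset Fm → Prop
  | ax {Δ A} : A ∈ Δ → Fm.neg A ∈ Δ → GS3 Δ
  | weak {Δ A} : GS3 Δ → GS3 (A ::ₘ Δ)
  | andE {Δ A B} : Fm.and A B ∈ Δ → GS3 (A ::ₘ B ::ₘ Δ) → GS3 Δ
  | negOrE {Δ A B} : Fm.neg (Fm.or A B) ∈ Δ → GS3 (Fm.neg A ::ₘ Fm.neg B ::ₘ Δ) → GS3 Δ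
  | negImpE {Δ A B} : Fm.neg (Fm.imp A B) ∈ Δ → GS3 (A ::ₘ Fm.neg B ::ₘ Δ) → GS3 Δ
  | negNegE {Δ A} : Fm.neg (Fm.neg A) ∈ Δ → GS3 (A ::ₘ Δ) → GS3 Δ
  | orE {Δ A B} : Fm.or A B ∈ Δ → GS3 (A ::ₘ Δ) → GS3 (B ::ₘ Δ) → GS3 Δ
  | impE {Δ A B} : Fm.imp A B ∈ Δ → GS3 (Fm.neg A ::ₘ Δ) → GS3 (B ::ₘ Δ) → GS3 Δ
  | negAndE {Δ A B} : Fm.neg (Fm.and A B) ∈ Δ → GS3 (Fm.neg A ::ₘ Δ) → GS3 (Fm.neg B ::ₘ Δ) → GS3 Δ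
  | allE {Δ A} (t : Tm) : Fm.all A ∈ Δ → GS3 (Fm.inst1 t A ::ₘ Δ) → GS3 Δ
  | negExE {Δ A} (t : Tm) : Fm.neg (Fm.ex A) ∈ Δ → GS3 (Fm.neg (Fm.inst1 t A) ::ₘ Δ) → GS3 Δ
  | exE {Δ A} (c : ℕ) : Fm.ex A ∈ Δ → (∀ B ∈ Δ, ¬ SymInFm c B) →
      GS3 (Fm.inst1 (Tm.fn c []) A ::ₘ Δ) → GS3 Δ
  | negAllE {Δ A} (c : ℕ) : Fm.neg (Fm.all A) ∈ Δ → (∀ B ∈ Δ, ¬ SymInFm c B) →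
      GS3 (Fm.neg (Fm.inst1 (Tm.fn c []) A) ::ₘ Δ) → GS3 Δ
/-- A rule application label (shared between tableaux and GS3 proof-trees). -/
inductive RuleApp : Type
  | andR (A B : Fm) | negOrR (A B : Fm) | negImpR (A B : Fm) | negNegR (A : Fm)
  | orR (A B : Fm) | impR (A B : Fm) | negAndR (A B : Fm)
  | allR (A : Fm) (t : Tm) | negExR (A : Fm) (t : Tm)
  | exR (A : Fm) (t : Tm) | negAllR (A : Fm) (t : Tm)
  | closureR (A B : Fm)
  | weakR (Δ' : Multiset Fm)

/-- The premises (children multisets) generated by a rule applied to `Δ`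
(rules are non-destructive: the principal formula is kept). -/
def RuleApp.kids (Δ : Multiset Fm) : RuleApp → List (Multiset Fm)
  | .andR A B => [A ::ₘ B ::ₘ Δ]
  | .negOrR A B => [Fm.neg A ::ₘ Fm.neg B ::ₘ Δ]
  | .negImpR A B => [A ::ₘ Fm.neg B ::ₘ Δ]
  | .negNegR A => [A ::ₘ Δ]
  | .orR A B => [A ::ₘ Δ, B ::ₘ Δ]
  | .impR A B => [Fm.neg A ::ₘ Δ, B ::ₘ Δ]
  | .negAndR A B => [Fm.neg A ::ₘ Δ, Fm.neg B ::ₘ Δ]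
  | .allR A t => [Fm.inst1 t A ::ₘ Δ]
  | .negExR A t => [Fm.neg (Fm.inst1 t A) ::ₘ Δ]
  | .exR A t => [Fm.inst1 t A ::ₘ Δ]
  | .negAllR A t => [Fm.neg (Fm.inst1 t A) ::ₘ Δ]
  | .closureR _ _ => []
  | .weakR Δ' => [Δ']

def RuleApp.isClosure : RuleApp → Prop
  | .closureR _ _ => True
  | _ => False

def RuleApp.isAlpha : RuleApp → Prop
  | .andR _ _ | .negOrR _ _ | .negImpR _ _ | .negNegR _ => True
  | _ => False

def RuleApp.isBeta : RuleApp → Prop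
  | .orR _ _ | .impR _ _ | .negAndR _ _ => True
  | _ => False

def RuleApp.isDelta : RuleApp → Prop
  | .exR _ _ | .negAllR _ _ => True
  | _ => False

/-- Instantiation of a rule application by a substitution of metavariables. -/
def RuleApp.substR (σ : ℕ → Tm) : RuleApp → RuleApp
  | .andR A B => .andR (A.substF σ) (B.substF σ)
  | .negOrR A B => .negOrR (A.substF σ) (B.substF σ)
  | .negImpR A B => .negImpR (A.substF σ) (B.substF σ)
  | .negNegR A => .negNegR (A.substF σ)
  | .orR A B => .orR (A.substF σ) (B.substF σ)
  | .impR A B => .impR (A.substF σ) (B.substF σ)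
  | .negAndR A B => .negAndR (A.substF σ) (B.substF σ)
  | .allR A t => .allR (A.substF σ) (substTm σ t)
  | .negExR A t => .negExR (A.substF σ) (substTm σ t)
  | .exR A t => .exR (A.substF σ) (substTm σ t)
  | .negAllR A t => .negAllR (A.substF σ) (substTm σ t)
  | .closureR A B => .closureR (A.substF σ) (B.substF σ)
  | .weakR Δ' => .weakR (Δ'.map (Fm.substF σ))

/-- Trees of multisets of formulas: `leaf` is an *open* leaf; internal nodes are
labelled with the rule applied there (a `closureR` node with no children is a closed leaf). -/
inductive FTree : Type
  | leaf : Multiset Fm → FTree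
  | node : Multiset Fm → RuleApp → List FTree → FTree

def FTree.root : FTree → Multiset Fm
  | .leaf Δ => Δ
  | .node Δ _ _ => Δ

/-- The subtree at a path (children indexed by position). -/
def FTree.subAt (t : FTree) : List ℕ → Option FTree
  | [] => some t
  | i :: p =>
    match t with
    | .leaf _ => none
    | .node _ _ ts =>
      match ts[i]? with
      | some t' => t'.subAt p
      | none => none

/-- The multiset at an open leaf located at the given path, if any. -/
def FTree.openLeafAt (t : FTree) (p : List ℕ) : Option (Multiset Fm) :=
  match t.subAt p with
  | some (.leaf Δ) => some Δ
  | _ => none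

/-- The rule applied at the node located at the given path, if any. -/
def FTree.ruleAt (t : FTree) (p : List ℕ) : Option RuleApp :=
  match t.subAt p with
  | some (.node _ r _) => some r
  | _ => none

/-- A tree is closed when it has no open leaves. -/
def FTree.closedT (t : FTree) : Prop := ∀ p Δ, t.subAt p ≠ some (.leaf Δ)

/-- Extend a tree by applying rule `r` at the open leaf located at path `p`. -/
def FTree.extend (r : RuleApp) : List ℕ → FTree → FTree
  | [], .leaf Δ => .node Δ r ((r.kids Δ).map .leaf)
  | [], t => t
  | _ :: _, .leaf Δ => .leaf Δ
  | i :: p, .node Δ r' ts => .node Δ r' (ts.modify i (FTree.extend r p))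
  termination_by p _ => p.length

/-- Well-formed trees w.r.t. a side-condition `Ok` on rule applications:
children carry exactly the premises generated by the rule. -/
inductive WFT (Ok : Multiset Fm → RuleApp → Prop) : FTree → Prop
  | leaf {Δ} : WFT Ok (.leaf Δ)
  | node {Δ r ts} : Ok Δ r → ts.map FTree.root = r.kids Δ →
      (∀ t ∈ ts, WFT Ok t) → WFT Ok (.node Δ r ts)

/-- Side conditions of GS3: principal formula present, genuinely fresh
constants in δ-rules, arbitrary terms in γ-rules, axiom on `A, ¬A`. -/
def okGS3 : Multiset Fm → RuleApp → Prop
  | Δ, .andR A B => Fm.and A B ∈ Δ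
  | Δ, .negOrR A B => Fm.neg (Fm.or A B) ∈ Δ
  | Δ, .negImpR A B => Fm.neg (Fm.imp A B) ∈ Δ
  | Δ, .negNegR A => Fm.neg (Fm.neg A) ∈ Δ
  | Δ, .orR A B => Fm.or A B ∈ Δ
  | Δ, .impR A B => Fm.imp A B ∈ Δ
  | Δ, .negAndR A B => Fm.neg (Fm.and A B) ∈ Δ
  | Δ, .allR A _ => Fm.all A ∈ Δ
  | Δ, .negExR A _ => Fm.neg (Fm.ex A) ∈ Δ
  | Δ, .exR A t => Fm.ex A ∈ Δ ∧ ∃ c, t = Tm.fn c [] ∧ ∀ B ∈ Δ, ¬ SymInFm c B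
  | Δ, .negAllR A t => Fm.neg (Fm.all A) ∈ Δ ∧ ∃ c, t = Tm.fn c [] ∧ ∀ B ∈ Δ, ¬ SymInFm c B
  | Δ, .closureR A B => A ∈ Δ ∧ B ∈ Δ ∧ B = Fm.neg A
  | Δ, .weakR Δ' => Δ' ⊆ Δ

/-- Side conditions of free-variable tableaux with on-the-fly inner
Skolemization, relative to the global unifier `σ`: γ-rules use fresh
metavariables, δ-rules use a fresh Skolem symbol applied to the metavariables
of the Skolemized formula, closure needs the two formulas to be σ-opposite. -/
def okTabFV (σ : ℕ → Tm) : Multiset Fm → RuleApp → Prop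
  | Δ, .andR A B => Fm.and A B ∈ Δ
  | Δ, .negOrR A B => Fm.neg (Fm.or A B) ∈ Δ
  | Δ, .negImpR A B => Fm.neg (Fm.imp A B) ∈ Δ
  | Δ, .negNegR A => Fm.neg (Fm.neg A) ∈ Δ
  | Δ, .orR A B => Fm.or A B ∈ Δ
  | Δ, .impR A B => Fm.imp A B ∈ Δ
  | Δ, .negAndR A B => Fm.neg (Fm.and A B) ∈ Δ
  | Δ, .allR A t => Fm.all A ∈ Δ ∧ ∃ X, t = Tm.mvar X ∧ ∀ B ∈ Δ, ¬ MvarInFm X B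
  | Δ, .negExR A t => Fm.neg (Fm.ex A) ∈ Δ ∧ ∃ X, t = Tm.mvar X ∧ ∀ B ∈ Δ, ¬ MvarInFm X B
  | Δ, .exR A t => Fm.ex A ∈ Δ ∧
      ∃ f, t = Tm.fn f (((Fm.ex A).mvarsF.dedup).map Tm.mvar) ∧ ∀ B ∈ Δ, ¬ SymInFm f B
  | Δ, .negAllR A t => Fm.neg (Fm.all A) ∈ Δ ∧
      ∃ f, t = Tm.fn f (((Fm.neg (Fm.all A)).mvarsF.dedup).map Tm.mvar) ∧ ∀ B ∈ Δ, ¬ SymInFm f B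
  | Δ, .closureR A B => A ∈ Δ ∧ B ∈ Δ ∧ Fm.substF σ B = Fm.neg (Fm.substF σ A)
  | _, .weakR _ => False

/-- Initial part of a tree (same root and rules up to some open leaves;
a closed leaf of `T` may not be replaced by an open leaf). -/
inductive Initial : FTree → FTree → Prop
  | leafLeaf {Δ} : Initial (.leaf Δ) (.leaf Δ)
  | openLeaf {Δ r ts} : ¬ r.isClosure → Initial (.leaf Δ) (.node Δ r ts)
  | node {Δ r ts₀ ts} : ts₀.length = ts.length →
      (∀ (i : ℕ) t₀ t, ts₀[i]? = some t₀ → ts[i]? = some t → Initial t₀ t) →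
      Initial (.node Δ r ts₀) (.node Δ r ts)

/-- A (total) link from an open GS3 proof-tree `π` to a tableau `T` with
unifier `σ`: each open leaf of `π` is mapped to an open leaf of `T` whose
σ-instantiated formulas all appear in the sequent of the leaf of `π`. -/
structure Link (σ : ℕ → Tm) (π T : FTree) where
  μ : List ℕ → List ℕ
  maps : ∀ p Γs, π.openLeafAt p = some Γs →
    ∃ Δ, T.openLeafAt (μ p) = some Δ ∧ ∀ A ∈ Δ, Fm.substF σ A ∈ Γs

/-- A partial link between two GS3 proof-trees. -/
structure PLink (π θ : FTree) where
  μ : List ℕ → Option (List ℕ)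
  maps : ∀ p Γs q, π.openLeafAt p = some Γs → μ p = some q →
    ∃ Δ, θ.openLeafAt q = some Δ ∧ ∀ A ∈ Δ, A ∈ Γs

/-- A bilink: two partial links with disjoint domains covering all open leaves. -/
structure Bilink (π θ₀ θ₁ : FTree) where
  l0 : PLink π θ₀
  l1 : PLink π θ₁
  disj : ∀ p, (l0.μ p).isSome → (l1.μ p).isSome → False
  cover : ∀ p Γs, π.openLeafAt p = some Γs → (l0.μ p).isSome ∨ (l1.μ p).isSome

/-- A formula appearing somewhere in a tree. -/
inductive InTree (A : Fm) : FTree → Prop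
  | leaf {Δ} : A ∈ Δ → InTree A (.leaf Δ)
  | here {Δ r ts} : A ∈ Δ → InTree A (.node Δ r ts)
  | child {Δ r ts t} : t ∈ ts → InTree A t → InTree A (.node Δ r ts)

mutual
/-- Number of rule applications in a tree. -/
def FTree.ruleCount : FTree → ℕ
  | .leaf _ => 0
  | .node _ _ ts => 1 + ruleCountL ts
def ruleCountL : List FTree → ℕ
  | [] => 0
  | t :: ts => t.ruleCount + ruleCountL ts
end

mutual
/-- Instantiate all formulas of a tree by a substitution (the naive translation). -/
def FTree.substT (σ : ℕ → Tm) : FTree → FTree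
  | .leaf Δ => .leaf (Δ.map (Fm.substF σ))
  | .node Δ r ts => .node (Δ.map (Fm.substF σ)) (r.substR σ) (substTL σ ts)
def substTL (σ : ℕ → Tm) : List FTree → List FTree
  | [] => []
  | t :: ts => t.substT σ :: substTL σ ts
end

section Aux

lemma subAt_append (t : FTree) (p q : List ℕ) :
    t.subAt (p ++ q) = (t.subAt p).bind (fun t' => t'.subAt q) := by
  induction p generalizing t with
  | nil => simp [FTree.subAt]
  | cons i p ih =>
    cases t with
    | leaf Δ => simp [FTree.subAt]
    | node Δ r ts =>
      simp only [List.cons_append, FTree.subAt]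
      cases ts[i]? with
      | none => simp
      | some t' => simpa using ih t'

lemma openLeafAt_iff (t : FTree) (p : List ℕ) (Γ : Multiset Fm) :
    t.openLeafAt p = some Γ ↔ t.subAt p = some (.leaf Γ) := by
  constructor
  · intro h
    unfold FTree.openLeafAt at h
    split at h
    · next heq => injection h with h; subst h; exact heq
    · cases h
  · intro h
    unfold FTree.openLeafAt
    rw [h]

lemma leaf_subAt_nil {Γ : Multiset Fm} {s : List ℕ} {x : FTree}
    (h : (FTree.leaf Γ).subAt s = some x) : s = [] := by
  cases s with
  | nil => rfl
  | cons i s => simp [FTree.subAt] at h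

lemma openLeaf_prefix {t : FTree} {p q : List ℕ} {Γ Γ' : Multiset Fm}
    (hp : t.openLeafAt p = some Γ) (hq : t.openLeafAt q = some Γ') (hpre : p <+: q) :
    p = q := by
  rcases hpre with ⟨s, rfl⟩
  rw [openLeafAt_iff] at hp hq
  rw [subAt_append, hp] at hq
  have := leaf_subAt_nil (show (FTree.leaf Γ).subAt s = some (FTree.leaf Γ') from hq)
  simp [this]

lemma root_extend (r : RuleApp) (q : List ℕ) (t : FTree) :
    (FTree.extend r q t).root = t.root := by
  cases q <;> cases t <;> simp [FTree.extend, FTree.root]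

lemma openLeafAt_node_cons (Δ : Multiset Fm) (r : RuleApp) (ts : List FTree)
    (j : ℕ) (p : List ℕ) :
    (FTree.node Δ r ts).openLeafAt (j :: p) =
      match ts[j]? with
      | some t => t.openLeafAt p
      | none => none := by
  unfold FTree.openLeafAt
  simp only [FTree.subAt]
  cases ts[j]? <;> rfl

lemma openLeaf_node_inv {Δ' : Multiset Fm} {r' : RuleApp} {ts : List FTree}
    {i : ℕ} {q : List ℕ} {Γ : Multiset Fm}
    (h : (FTree.node Δ' r' ts).openLeafAt (i :: q) = some Γ) :
    ∃ ti, ts[i]? = some ti ∧ ti.openLeafAt q = some Γ := by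
  rw [openLeafAt_node_cons] at h
  cases hts : ts[i]? with
  | none => rw [hts] at h; exact absurd h (by simp)
  | some ti => rw [hts] at h; exact ⟨ti, rfl, h⟩

lemma extend_node (r : RuleApp) : ∀ (q : List ℕ) (t : FTree) (Δ : Multiset Fm),
    t.openLeafAt q = some Δ →
    (FTree.extend r q t).subAt q = some (.node Δ r ((r.kids Δ).map .leaf)) := by
  intro q
  induction q with
  | nil =>
    intro t Δ h
    rw [openLeafAt_iff] at h
    simp only [FTree.subAt, Option.some.injEq] at h
    subst h
    simp [FTree.extend, FTree.subAt]
  | cons i q ih =>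
    intro t Δ h
    cases t with
    | leaf Γ => rw [openLeafAt_iff] at h; simp [FTree.subAt] at h
    | node Δ' r' ts =>
      obtain ⟨ti, hts, hti⟩ := openLeaf_node_inv h
      simp only [FTree.extend, FTree.subAt, List.getElem?_modify, hts]
      simp [ih ti Δ hti]

lemma extend_old (r : RuleApp) : ∀ (q : List ℕ) (t : FTree) (Δ : Multiset Fm) (p : List ℕ),
    t.openLeafAt q = some Δ → ¬ q <+: p →
    (FTree.extend r q t).openLeafAt p = t.openLeafAt p := by
  intro q
  induction q with
  | nil => intro t Δ p _ hpre; exact absurd (List.nil_prefix) hpre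
  | cons i q ih =>
    intro t Δ p h hpre
    cases t with
    | leaf Γ => rw [openLeafAt_iff] at h; simp [FTree.subAt] at h
    | node Δ' r' ts =>
      obtain ⟨ti, hts, hti⟩ := openLeaf_node_inv h
      cases p with
      | nil =>
        simp only [FTree.extend]
        rfl
      | cons j p' =>
        simp only [FTree.extend]
        rw [openLeafAt_node_cons, openLeafAt_node_cons]
        simp only [List.getElem?_modify, hts]
        by_cases hij : i = j
        · subst hij
          simp only [hts, Option.map_some, if_pos rfl]
          exact ih ti Δ p' hti (fun hc => hpre (List.cons_prefix_cons.mpr ⟨rfl, hc⟩))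
        · simp only [hij, if_false]
          simp

end Aux
lemma subAt_node_cons (Δ : Multiset Fm) (r : RuleApp) (ts : List FTree) (i : ℕ) (p : List ℕ) :
    (FTree.node Δ r ts).subAt (i :: p) = (ts[i]?).bind (fun t => t.subAt p) := by
  show (match ts[i]? with | some t => t.subAt p | none => none) = _
  cases ts[i]? <;> rfl

lemma subAt_extend_kid (r : RuleApp) {q : List ℕ} {t : FTree} {Δ : Multiset Fm} (i : ℕ)
    (h : t.openLeafAt q = some Δ) :
    (FTree.extend r q t).subAt (q ++ [i]) = ((r.kids Δ)[i]?).map FTree.leaf := by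
  rw [subAt_append, extend_node r q t Δ h]
  show (FTree.node Δ r ((r.kids Δ).map .leaf)).subAt [i] = _
  rw [subAt_node_cons, List.getElem?_map]
  cases (r.kids Δ)[i]? <;> rfl

lemma extend_new (r : RuleApp) {q : List ℕ} {t : FTree} {Δ : Multiset Fm} (i : ℕ)
    (h : t.openLeafAt q = some Δ) :
    (FTree.extend r q t).openLeafAt (q ++ [i]) = (r.kids Δ)[i]? := by
  unfold FTree.openLeafAt
  rw [subAt_extend_kid r i h]
  cases (r.kids Δ)[i]? <;> rfl

lemma extend_char (r : RuleApp) {q : List ℕ} {t : FTree} {Δ : Multiset Fm}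
    {p : List ℕ} {Γ : Multiset Fm}
    (h : t.openLeafAt q = some Δ)
    (hp : (FTree.extend r q t).openLeafAt p = some Γ) :
    (t.openLeafAt p = some Γ ∧ p ≠ q) ∨
      ∃ i, p = q ++ [i] ∧ (r.kids Δ)[i]? = some Γ := by
  by_cases hpre : q <+: p
  · rcases hpre with ⟨s, rfl⟩
    cases s with
    | nil =>
      exfalso
      rw [openLeafAt_iff, List.append_nil, extend_node r q t Δ h] at hp
      cases hp
    | cons i s =>
      cases s with
      | nil => exact Or.inr ⟨i, rfl, (extend_new r i h) ▸ hp⟩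
      | cons j s =>
        exfalso
        rw [openLeafAt_iff] at hp
        rw [show q ++ i :: j :: s = (q ++ [i]) ++ (j :: s) by simp] at hp
        rw [subAt_append, subAt_extend_kid r i h] at hp
        cases hk : (r.kids Δ)[i]? with
        | none => rw [hk] at hp; cases hp
        | some K =>
          rw [hk] at hp
          simp only [Option.map_some] at hp
          have := leaf_subAt_nil (show (FTree.leaf K).subAt (j :: s) = some (FTree.leaf Γ) from hp)
          cases this
  · left
    refine ⟨?_, fun hc => hpre (hc ▸ List.prefix_refl q)⟩
    rw [extend_old r q t Δ p h hpre] at hp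
    exact hp

lemma map_root_modify (r : RuleApp) (q : List ℕ) (ts : List FTree) (i : ℕ) :
    (List.modify ts i (FTree.extend r q)).map FTree.root = ts.map FTree.root := by
  apply List.ext_getElem?
  intro j
  simp only [List.getElem?_map, List.getElem?_modify]
  cases ts[j]? with
  | none => rfl
  | some t =>
    by_cases h : i = j
    · simp [h, root_extend]
    · simp [h]

lemma wft_extend {Ok : Multiset Fm → RuleApp → Prop} (r : RuleApp) :
    ∀ (q : List ℕ) (t : FTree) (Δ : Multiset Fm), WFT Ok t →
    t.openLeafAt q = some Δ → Ok Δ r → WFT Ok (FTree.extend r q t) := by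
  intro q
  induction q with
  | nil =>
    intro t Δ hw h hok
    rw [openLeafAt_iff] at h
    simp only [FTree.subAt, Option.some.injEq] at h
    subst h
    simp only [FTree.extend]
    refine WFT.node hok ?_ ?_
    · rw [List.map_map]
      have : FTree.root ∘ FTree.leaf = id := rfl
      rw [this, List.map_id]
    · intro t' ht'
      simp only [List.mem_map] at ht'
      obtain ⟨Γ, _, rfl⟩ := ht'
      exact WFT.leaf
  | cons i q ih =>
    intro t Δ hw h hok
    cases t with
    | leaf Γ => rw [openLeafAt_iff] at h; simp [FTree.subAt] at h
    | node Δ' r' ts =>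
      obtain ⟨ti, hts, hti⟩ := openLeaf_node_inv h
      cases hw with
      | node hok' hroots hch =>
        simp only [FTree.extend]
        refine WFT.node hok' ?_ ?_
        · rw [map_root_modify]; exact hroots
        · intro t' ht'
          obtain ⟨j, hj⟩ := List.getElem?_of_mem ht'
          rw [List.getElem?_modify] at hj
          by_cases hij : i = j
          · subst hij
            rw [hts] at hj
            obtain rfl : FTree.extend r q ti = t' := by simpa using hj
            exact ih ti Δ (hch ti (List.mem_of_getElem? hts)) hti hok
          · cases hjj : ts[j]? with
            | none => rw [hjj] at hj; cases hj
            | some u =>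
              rw [hjj] at hj
              obtain rfl : u = t' := by simpa [hij] using hj
              exact hch u (List.mem_of_getElem? hjj)
lemma fold_preserve (r' : RuleApp) (π : FTree) :
    ∀ ps : List (List ℕ), ps.Nodup → (∀ q ∈ ps, ∃ Γ, π.openLeafAt q = some Γ) →
    ∀ p Γp, π.openLeafAt p = some Γp → p ∉ ps →
    (ps.foldr (FTree.extend r') π).openLeafAt p = some Γp := by
  intro ps
  induction ps with
  | nil => intro _ _ p Γp h _; exact h
  | cons q ps ih =>
    intro hnd hop p Γp h hp
    have hndq := List.nodup_cons.mp hnd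
    obtain ⟨Γq, hΓq⟩ := hop q ((List.mem_cons_self : q ∈ q :: ps))
    have hq' : (ps.foldr (FTree.extend r') π).openLeafAt q = some Γq :=
      ih hndq.2 (fun x hx => hop x (List.mem_cons_of_mem _ hx)) q Γq hΓq hndq.1
    have hp' : (ps.foldr (FTree.extend r') π).openLeafAt p = some Γp :=
      ih hndq.2 (fun x hx => hop x (List.mem_cons_of_mem _ hx)) p Γp h
        (fun hc => hp (List.mem_cons_of_mem _ hc))
    simp only [List.foldr_cons]
    rw [extend_old r' q _ Γq p hq' ?_]
    · exact hp'
    · intro hc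
      exact hp (openLeaf_prefix hq' hp' hc ▸ (List.mem_cons_self : q ∈ q :: ps))

lemma fold_main (r' : RuleApp) (π : FTree) (hπ : WFT okGS3 π) :
    ∀ ps : List (List ℕ), ps.Nodup →
    (∀ p ∈ ps, ∃ Γ, π.openLeafAt p = some Γ ∧ okGS3 Γ r') →
    WFT okGS3 (ps.foldr (FTree.extend r') π) ∧
    ∀ q Γ, (ps.foldr (FTree.extend r') π).openLeafAt q = some Γ →
      (π.openLeafAt q = some Γ ∧ q ∉ ps) ∨
      ∃ p Γp i, p ∈ ps ∧ π.openLeafAt p = some Γp ∧ q = p ++ [i] ∧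
        (r'.kids Γp)[i]? = some Γ := by
  intro ps
  induction ps with
  | nil =>
    intro _ _
    exact ⟨hπ, fun q Γ h => Or.inl ⟨h, by simp⟩⟩
  | cons p ps ih =>
    intro hnd hop
    have hndp := List.nodup_cons.mp hnd
    obtain ⟨Γp, hΓp, hokp⟩ := hop p ((List.mem_cons_self : p ∈ p :: ps))
    obtain ⟨ihW, ihC⟩ := ih hndp.2 (fun x hx => hop x (List.mem_cons_of_mem _ hx))
    have hfp : (ps.foldr (FTree.extend r') π).openLeafAt p = some Γp :=
      fold_preserve r' π ps hndp.2
        (fun x hx => (hop x (List.mem_cons_of_mem _ hx)).imp (fun Γ hΓ => hΓ.1))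
        p Γp hΓp hndp.1
    simp only [List.foldr_cons]
    constructor
    · exact wft_extend r' p _ Γp ihW hfp hokp
    · intro q Γ hq
      rcases extend_char r' hfp hq with ⟨hq', hqp⟩ | ⟨i, rfl, hk⟩
      · rcases ihC q Γ hq' with ⟨h1, h2⟩ | ⟨p', Γp', i, hp', h1, h2, h3⟩
        · exact Or.inl ⟨h1, by simp [hqp, h2]⟩
        · exact Or.inr ⟨p', Γp', i, List.mem_cons_of_mem _ hp', h1, h2, h3⟩
      · exact Or.inr ⟨p, Γp, i, (List.mem_cons_self : p ∈ p :: ps), hΓp, rfl, hk⟩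
/-- Parallel extension preserves links for α-rules: if the tableau `T₀`
(an initial part of the closed tableau `T` with ground unifier `σ`) is extended
at open leaf `b` by an α-rule `r`, then applying the corresponding GS3 α-rule
(instantiated by `σ`) at every open leaf of `π₀` that `μ₀` maps to `b`
yields a well-formed GS3 proof-tree linked to the extended tableau. -/
theorem parallel_extension_alpha (σ : ℕ → Tm) (T T₀ π₀ : FTree) (L : Link σ π₀ T₀)
    (hT : WFT (okTabFV σ) T) (hTcl : T.closedT) (hini : Initial T₀ T)
    (hπ : WFT okGS3 π₀) (hroot : π₀.root = T₀.root.map (Fm.substF σ))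
    (b : List ℕ) (Δ : Multiset Fm) (r : RuleApp)
    (hb : T₀.openLeafAt b = some Δ) (hrule : T.ruleAt b = some r)
    (halpha : r.isAlpha) (hok : okTabFV σ Δ r)
    (ps : List (List ℕ)) (hnd : ps.Nodup)
    (hps : ∀ p, p ∈ ps ↔ (∃ Γs, π₀.openLeafAt p = some Γs) ∧ L.μ p = b) :
    WFT okGS3 (ps.foldr (FTree.extend (r.substR σ)) π₀) ∧
      Nonempty (Link σ (ps.foldr (FTree.extend (r.substR σ)) π₀) (FTree.extend r b T₀)) := by
  classical
  have key : ∃ Δ' : Multiset Fm, r.kids Δ = [Δ'] ∧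
      ∀ Γs : Multiset Fm, (∀ C ∈ Δ, Fm.substF σ C ∈ Γs) →
        okGS3 Γs (r.substR σ) ∧ ∃ Θ, (r.substR σ).kids Γs = [Θ] ∧
          ∀ C ∈ Δ', Fm.substF σ C ∈ Θ := by
    cases r with
    | andR A B =>
      refine ⟨A ::ₘ B ::ₘ Δ, rfl, fun Γs hΓ => ?_⟩
      refine ⟨hΓ _ hok, _, rfl, fun C hC => ?_⟩
      simp only [Multiset.mem_cons] at hC ⊢
      rcases hC with rfl | rfl | hC
      · exact Or.inl rfl
      · exact Or.inr (Or.inl rfl)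
      · exact Or.inr (Or.inr (hΓ _ hC))
    | negOrR A B =>
      refine ⟨Fm.neg A ::ₘ Fm.neg B ::ₘ Δ, rfl, fun Γs hΓ => ?_⟩
      refine ⟨hΓ _ hok, _, rfl, fun C hC => ?_⟩
      simp only [Multiset.mem_cons] at hC ⊢
      rcases hC with rfl | rfl | hC
      · exact Or.inl rfl
      · exact Or.inr (Or.inl rfl)
      · exact Or.inr (Or.inr (hΓ _ hC))
    | negImpR A B =>
      refine ⟨A ::ₘ Fm.neg B ::ₘ Δ, rfl, fun Γs hΓ => ?_⟩
      refine ⟨hΓ _ hok, _, rfl, fun C hC => ?_⟩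
      simp only [Multiset.mem_cons] at hC ⊢
      rcases hC with rfl | rfl | hC
      · exact Or.inl rfl
      · exact Or.inr (Or.inl rfl)
      · exact Or.inr (Or.inr (hΓ _ hC))
    | negNegR A =>
      refine ⟨A ::ₘ Δ, rfl, fun Γs hΓ => ?_⟩
      refine ⟨hΓ _ hok, _, rfl, fun C hC => ?_⟩
      simp only [Multiset.mem_cons] at hC ⊢
      rcases hC with rfl | hC
      · exact Or.inl rfl
      · exact Or.inr (hΓ _ hC)
    | orR A B => exact halpha.elim
    | impR A B => exact halpha.elim
    | negAndR A B => exact halpha.elim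
    | allR A t => exact halpha.elim
    | negExR A t => exact halpha.elim
    | exR A t => exact halpha.elim
    | negAllR A t => exact halpha.elim
    | closureR A B => exact halpha.elim
    | weakR Δ'' => exact halpha.elim
  obtain ⟨Δ', hkΔ, hkey⟩ := key
  have hop : ∀ p ∈ ps, ∃ Γ, π₀.openLeafAt p = some Γ ∧ okGS3 Γ (r.substR σ) := by
    intro p hp
    obtain ⟨⟨Γs, hΓs⟩, hμ⟩ := (hps p).mp hp
    obtain ⟨Δb, hΔb, hsub⟩ := L.maps p Γs hΓs
    rw [hμ, hb] at hΔb
    obtain rfl : Δ = Δb := Option.some.inj hΔb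
    exact ⟨Γs, hΓs, (hkey Γs hsub).1⟩
  obtain ⟨hW, hchar⟩ := fold_main (r.substR σ) π₀ hπ ps hnd hop
  refine ⟨hW, ⟨⟨fun q => if ∃ p ∈ ps, ∃ i : ℕ, q = p ++ [i] then b ++ [0] else L.μ q, ?_⟩⟩⟩
  intro q Γs hq
  rcases hchar q Γs hq with ⟨hq', hqps⟩ | ⟨p', Γp, i, hp', hΓp, rfl, hk⟩
  · -- old leaf, untouched
    have hcond : ¬ ∃ p ∈ ps, ∃ i : ℕ, q = p ++ [i] := by
      rintro ⟨p, hp, i, rfl⟩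
      obtain ⟨⟨Γx, hΓx⟩, _⟩ := (hps p).mp hp
      rw [openLeafAt_iff] at hq' hΓx
      rw [subAt_append, hΓx] at hq'
      have := leaf_subAt_nil (show (FTree.leaf Γx).subAt [i] = some (FTree.leaf Γs) from hq')
      cases this
    simp only [if_neg hcond]
    obtain ⟨Δq, hΔq, hsubq⟩ := L.maps q Γs hq'
    have hne : L.μ q ≠ b := fun hc => hqps ((hps q).mpr ⟨⟨Γs, hq'⟩, hc⟩)
    refine ⟨Δq, ?_, hsubq⟩
    rw [extend_old r b T₀ Δ (L.μ q) hb ?_]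
    · exact hΔq
    · intro hc
      exact hne (openLeaf_prefix hb hΔq hc).symm
  · -- new leaf
    obtain ⟨⟨Γx, hΓx⟩, hμ⟩ := (hps p').mp hp'
    obtain ⟨Δb, hΔb, hsub⟩ := L.maps p' Γp hΓp
    rw [hμ, hb] at hΔb
    obtain rfl : Δ = Δb := Option.some.inj hΔb
    obtain ⟨_, Θ, hΘ, hmem⟩ := hkey Γp hsub
    rw [hΘ] at hk
    have hi : i = 0 ∧ Θ = Γs := by
      cases i with
      | zero => exact ⟨rfl, Option.some.inj hk⟩
      | succ n => simp at hk
    obtain ⟨rfl, rfl⟩ := hi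
    have hcnd : ∃ p ∈ ps, ∃ i : ℕ, p' ++ [0] = p ++ [i] := ⟨p', hp', 0, rfl⟩
    simp only [if_pos hcnd]
    refine ⟨Δ', ?_, fun A hA => hmem A hA⟩
    rw [extend_new r 0 hb, hkΔ]
    rfl
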